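/- Let p, q, m, n be positive integers such that m·n is coprime to γ(p,q) = |det Δ_{p,q}|. Then the image of the fold monomorphism ι : K(p,q) → K(mp,nq) is a direct summand of K(mp,nq): there exists a subgroup H ≤ K(mp,nq) such that K(mp,nq) is the internal direct sum of ι(K(p,q)) and H. In other words, G(p,q) is realized as a direct summand of G(mp,nq). -/

import Mathlib

open scoped BigOperators

/-- `v` lies in the open rectangle `Γ(p,q) = (0,p) × (0,q) ∩ ℤ²`. -/
def InRect (p q : ℤ) (v : ℤ × ℤ) : Prop :=
  0 < v.1 ∧ v.1 < p ∧ 0 < v.2 ∧ v.2 < q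

/-- `ψ : ℤ² → ℝ/ℤ` belongs to `K(p,q)`, the realization of the sandpile group
`G(p,q)`: it vanishes outside `Γ(p,q)` and satisfies
`4·ψ(v) = Σ_{|w−v|=1} ψ(w)` for all `v ∈ Γ(p,q)`. -/
def IsK (p q : ℤ) (ψ : ℤ × ℤ → AddCircle (1 : ℝ)) : Prop :=
  (∀ v, ¬ InRect p q v → ψ v = 0) ∧
  ∀ v, InRect p q v → (4 : ℤ) • ψ v =
    ψ (v.1 + 1, v.2) + ψ (v.1 - 1, v.2) + ψ (v.1, v.2 + 1) + ψ (v.1, v.2 - 1)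

/-- `σ_p(x) = x − kp` if `k = ⌊x/p⌋` is even and `(k+1)p − x` if `k` is odd. -/
def sigmaFold (p x : ℤ) : ℤ :=
  if Even (x / p) then x - x / p * p else (x / p + 1) * p - x

open Classical in
/-- The fold map `ι : K(p,q) → K(P,Q)` (with `P = mp`, `Q = nq`):
`ι(ψ)(x,y) = (−1)^{⌊x/p⌋+⌊y/q⌋} ψ(σ_p(x), σ_q(y))` on `Γ(P,Q)` and `0` outside. -/
noncomputable def foldMap (p q P Q : ℤ) (ψ : ℤ × ℤ → AddCircle (1 : ℝ)) :
    ℤ × ℤ → AddCircle (1 : ℝ) :=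
  fun v => if InRect P Q v then
      ((if Even (v.1 / p + v.2 / q) then (1 : ℤ) else -1)) •
        ψ (sigmaFold p v.1, sigmaFold q v.2)
    else 0

/-- `μ_{p,k}(x) = kp + x` if `k` is even and `(k+1)p − x` if `k` is odd. -/
def muFold (p k x : ℤ) : ℤ := if Even k then k * p + x else (k + 1) * p - x

open Classical in
/-- The dual map `π : K(mp,nq) → K(p,q)`:
`π(ψ)(x,y) = Σ_{k<m} Σ_{l<n} (−1)^{k+l} ψ(μ_{p,k}(x), μ_{q,l}(y))` on `Γ(p,q)`
and `0` outside. -/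
noncomputable def dualMap (p q : ℤ) (m n : ℕ) (ψ : ℤ × ℤ → AddCircle (1 : ℝ)) :
    ℤ × ℤ → AddCircle (1 : ℝ) :=
  fun v => if InRect p q v then
      ∑ k ∈ Finset.range m, ∑ l ∈ Finset.range n,
        ((-1 : ℤ) ^ (k + l)) • ψ (muFold p k v.1, muFold q l v.2)
    else 0

/-- The lattice points of the open rectangle `(0,p) × (0,q)`, as a finset of `ℤ²`. -/
noncomputable def rectPts (p q : ℕ) : Finset (ℤ × ℤ) :=
  Finset.Ioo (0 : ℤ) (p : ℤ) ×ˢ Finset.Ioo (0 : ℤ) (q : ℤ)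

open Classical in
/-- The reduced Laplacian `Δ_{p,q}` of the rectangle: `4` on the diagonal, `-1`
between lattice neighbors (points at Euclidean distance `1`), `0` otherwise. -/
noncomputable def rectLap (p q : ℕ) : Matrix (rectPts p q) (rectPts p q) ℤ :=
  fun v w => if v = w then 4
    else if ((v : ℤ × ℤ).1 - (w : ℤ × ℤ).1) ^ 2 +
            ((v : ℤ × ℤ).2 - (w : ℤ × ℤ).2) ^ 2 = 1 then -1 else 0

/-- `γ(p,q) = |det Δ_{p,q}|`, the order of the sandpile group `G(p,q)`, equal to
the number of spanning trees of the rectangular grid graph. -/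
noncomputable def gammaRect (p q : ℕ) : ℤ := |(rectLap p q).det|

/-- `K(p,q)` as an additive subgroup of the group of all functions `ℤ² → ℝ/ℤ`. -/
noncomputable def Ksub (p q : ℤ) : AddSubgroup ((ℤ × ℤ) → AddCircle (1 : ℝ)) where
  carrier := {ψ | IsK p q ψ}
  zero_mem' := ⟨fun v _ => rfl, fun v _ => by simp⟩
  add_mem' := by
    rintro a b ⟨ha0, ha⟩ ⟨hb0, hb⟩
    refine ⟨fun v hv => by simp [ha0 v hv, hb0 v hv], fun v hv => ?_⟩
    have := ha v hv
    have := hb v hv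
    simp only [Pi.add_apply, smul_add]
    rw [ha v hv, hb v hv]
    abel
  neg_mem' := by
    rintro a ⟨ha0, ha⟩
    refine ⟨fun v hv => by simp [ha0 v hv], fun v hv => ?_⟩
    simp only [Pi.neg_apply, smul_neg]
    rw [ha v hv]
    abel

lemma divmod_eq (p k r : ℤ) (hp : 0 < p) (h0 : 0 ≤ r) (h1 : r < p) :
    (k*p + r)/p = k ∧ (k*p+r)%p = r := by
  constructor
  · rw [add_comm, Int.add_mul_ediv_right _ _ (by omega : p ≠ 0), Int.ediv_eq_zero_of_lt h0 h1]; ring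
  · rw [add_comm, Int.add_mul_emod_self_right]
    exact Int.emod_eq_of_lt h0 h1

lemma sigma_eq (p x : ℤ) :
    sigmaFold p x = if Even (x / p) then x % p else p - x % p := by
  unfold sigmaFold
  split <;> rw [Int.emod_def] <;> ring

lemma sigma_bounds (p x : ℤ) (hp : 0 < p) : 0 ≤ sigmaFold p x ∧ sigmaFold p x ≤ p := by
  have h0 := Int.emod_nonneg x (by omega : p ≠ 0)
  have h1 := Int.emod_lt_of_pos x hp
  rw [sigma_eq]; split <;> omega

lemma sigma_dvd (p x : ℤ) (hp : 0 < p) (h : x % p = 0) :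
    sigmaFold p x = 0 ∨ sigmaFold p x = p := by
  rw [sigma_eq]; split <;> omega

lemma sigma_pos (p x : ℤ) (hp : 0 < p) (h : x % p ≠ 0) :
    0 < sigmaFold p x ∧ sigmaFold p x < p := by
  have h0 := Int.emod_nonneg x (by omega : p ≠ 0)
  have h1 := Int.emod_lt_of_pos x hp
  rw [sigma_eq]; split <;> omega

section OneD
variable {M : Type*} [AddCommGroup M] (p : ℤ) (g : ℤ → M)

/-- the 1-D odd-periodic extension -/
noncomputable def tg (x : ℤ) : M := (if Even (x / p) then (1:ℤ) else -1) • g (sigmaFold p x)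

variable (hp : 0 < p) (hg : ∀ t, t ≤ 0 ∨ p ≤ t → g t = 0)
include hp hg

lemma tg_dvd (x : ℤ) (h : x % p = 0) : tg p g x = 0 := by
  rcases sigma_dvd p x hp h with h' | h' <;>
    simp [tg, h', hg 0 (Or.inl le_rfl), hg p (Or.inr le_rfl)]

lemma tg_dvd_sum (x : ℤ) (h : x % p = 0) : tg p g (x+1) + tg p g (x-1) = 0 := by
  rcases eq_or_lt_of_le (by omega : (1:ℤ) ≤ p) with hp1 | hp2
  · have : ∀ t : ℤ, g t = 0 := fun t => hg t (by omega)
    simp [tg, this]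
  · set k := x / p with hk
    have hx : x = k * p := by
      have h2 := Int.mul_ediv_add_emod x p
      rw [h, add_zero] at h2
      rw [mul_comm]; exact h2.symm
    have h1 : (x+1)/p = k ∧ (x+1)%p = 1 := by
      have := divmod_eq p k 1 hp (by omega) (by omega); rw [← hx] at this; exact this
    have h2 : (x-1)/p = k-1 ∧ (x-1)%p = p-1 := by
      have h3 := divmod_eq p (k-1) (p-1) hp (by omega) (by omega)
      have e : (k-1)*p + (p-1) = x - 1 := by rw [hx]; ring
      rw [e] at h3; exact h3
    have hpar : ¬ Even (k-1) ↔ Even k := by simp [Int.even_sub_one]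
    rcases em (Even k) with he | he
    · have s1 : sigmaFold p (x+1) = 1 := by rw [sigma_eq, h1.1, h1.2, if_pos he]
      have s2 : sigmaFold p (x-1) = 1 := by
        rw [sigma_eq, h2.1, h2.2, if_neg (hpar.mpr he)]; ring
      unfold tg
      rw [h1.1, h2.1, s1, s2, if_pos he, if_neg (hpar.mpr he)]
      simp
    · have s1 : sigmaFold p (x+1) = p - 1 := by rw [sigma_eq, h1.1, h1.2, if_neg he]
      have s2 : sigmaFold p (x-1) = p - 1 := by
        rw [sigma_eq, h2.1, h2.2, if_pos (by simpa [Int.even_sub_one] using he)]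
      unfold tg
      rw [h1.1, h2.1, s1, s2, if_neg he, if_pos (by simpa [Int.even_sub_one] using he)]
      simp

lemma tg_sum (x : ℤ) (h : x % p ≠ 0) :
    tg p g (x+1) + tg p g (x-1) =
      (if Even (x / p) then (1:ℤ) else -1) •
        (g (sigmaFold p x + 1) + g (sigmaFold p x - 1)) := by
  set k := x / p with hk
  set r := x % p with hr
  have h0 := Int.emod_nonneg x (by omega : p ≠ 0)
  have hlt := Int.emod_lt_of_pos x hp
  have hx : x = k * p + r := by
    have h2 := Int.mul_ediv_add_emod x p
    rw [← hk, ← hr, mul_comm] at h2; exact h2.symm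
  have h2 : (x-1)/p = k ∧ (x-1)%p = r-1 := by
    have h3 := divmod_eq p k (r-1) hp (by omega) (by omega)
    have e : k*p + (r-1) = x - 1 := by rw [hx]; ring
    rw [e] at h3; exact h3
  have s2 : sigmaFold p (x-1) = if Even k then sigmaFold p x - 1 else sigmaFold p x + 1 := by
    rw [sigma_eq, sigma_eq, h2.1, h2.2, ← hk, ← hr]
    split <;> ring
  rcases eq_or_lt_of_le (by omega : r + 1 ≤ p) with hrp | hrp
  · -- r = p - 1 : x+1 is divisible by p
    have hdvd : (x+1) % p = 0 := by
      have h3 := divmod_eq p (k+1) 0 hp le_rfl hp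
      have e : (k+1)*p + 0 = x + 1 := by rw [hx]; ring_nf; omega
      rw [e] at h3; exact h3.2
    have t1 : tg p g (x+1) = 0 := tg_dvd p g hp hg (x+1) hdvd
    have gz : g (sigmaFold p x + (if Even k then 1 else -1)) = 0 := by
      rw [sigma_eq, ← hk, ← hr]
      rcases em (Even k) with he | he
      · rw [if_pos he, if_pos he]; exact hg _ (Or.inr (by omega))
      · rw [if_neg he, if_neg he]; exact hg _ (Or.inl (by omega))
    rw [t1]
    unfold tg
    rw [h2.1, s2]
    rcases em (Even k) with he | he
    · have : g (sigmaFold p x + 1) = 0 := by simpa [he] using gz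
      simp [he, this]
    · have : g (sigmaFold p x - 1) = 0 := by simpa [he, sub_eq_add_neg] using gz
      simp [he, this]
  · -- r + 1 < p : same block
    have h1 : (x+1)/p = k ∧ (x+1)%p = r+1 := by
      have h3 := divmod_eq p k (r+1) hp (by omega) (by omega)
      have e : k*p + (r+1) = x + 1 := by rw [hx]; ring
      rw [e] at h3; exact h3
    have s1 : sigmaFold p (x+1) = if Even k then sigmaFold p x + 1 else sigmaFold p x - 1 := by
      rw [sigma_eq, sigma_eq, h1.1, h1.2, ← hk, ← hr]
      split <;> ring
    unfold tg
    rw [h1.1, h2.1, s1, s2]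
    rcases em (Even k) with he | he
    · simp [he, smul_add]
    · simp [he, smul_add, add_comm]
end OneD

lemma eps_mul {M : Type*} [AddCommGroup M] (a b : ℤ) (z : M) :
    (if Even (a+b) then (1:ℤ) else -1) • z =
      (if Even a then (1:ℤ) else -1) • (if Even b then (1:ℤ) else -1) • z := by
  rcases em (Even a) with ha | ha <;> rcases em (Even b) with hb | hb <;>
    simp [Int.even_add, ha, hb]

lemma isK_vanish {p q : ℤ} {ψ : ℤ × ℤ → AddCircle (1:ℝ)}
    (h0 : ∀ v, ¬ InRect p q v → ψ v = 0) (s t : ℤ)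
    (h : s ≤ 0 ∨ p ≤ s ∨ t ≤ 0 ∨ q ≤ t) : ψ (s, t) = 0 := by
  apply h0; unfold InRect; dsimp only; omega

noncomputable def tilde (p q : ℤ) (ψ : ℤ × ℤ → AddCircle (1:ℝ)) : ℤ × ℤ → AddCircle (1:ℝ) :=
  fun v => (if Even (v.1/p + v.2/q) then (1:ℤ) else -1) •
    ψ (sigmaFold p v.1, sigmaFold q v.2)

section Tilde
variable (p q : ℤ) (ψ : ℤ × ℤ → AddCircle (1:ℝ)) (hp : 0 < p) (hq : 0 < q)
  (hψ0 : ∀ v, ¬ InRect p q v → ψ v = 0)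

lemma tilde_as_tgx (x y : ℤ) :
    tilde p q ψ (x, y) =
      tg p (fun s => (if Even (y/q) then (1:ℤ) else -1) • ψ (s, sigmaFold q y)) x := by
  unfold tilde tg
  exact eps_mul _ _ _

lemma tilde_as_tgy (x y : ℤ) :
    tilde p q ψ (x, y) =
      tg q (fun t => (if Even (x/p) then (1:ℤ) else -1) • ψ (sigmaFold p x, t)) y := by
  unfold tilde tg
  rw [eps_mul]
  exact smul_comm _ _ _

include hp hq hψ0

lemma gx_vanish (y : ℤ) : ∀ s, s ≤ 0 ∨ p ≤ s →
    (if Even (y/q) then (1:ℤ) else -1) • ψ (s, sigmaFold q y) = 0 := by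
  intro s hs
  rw [isK_vanish hψ0 s _ (by tauto)]; simp

lemma gy_vanish (x : ℤ) : ∀ t, t ≤ 0 ∨ q ≤ t →
    (if Even (x/p) then (1:ℤ) else -1) • ψ (sigmaFold p x, t) = 0 := by
  intro t ht
  rw [isK_vanish hψ0 _ t (by tauto)]; simp

lemma tilde_vanish (x y : ℤ) (h : x % p = 0 ∨ y % q = 0) : tilde p q ψ (x, y) = 0 := by
  rcases h with h | h
  · rw [tilde_as_tgx]
    exact tg_dvd p _ hp (gx_vanish p q ψ hp hq hψ0 y) x h
  · rw [tilde_as_tgy]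
    exact tg_dvd q _ hq (gy_vanish p q ψ hp hq hψ0 x) y h

lemma tilde_harmonic (hψ : IsK p q ψ) (x y : ℤ) :
    (4:ℤ) • tilde p q ψ (x, y) =
      tilde p q ψ (x+1, y) + tilde p q ψ (x-1, y) +
      tilde p q ψ (x, y+1) + tilde p q ψ (x, y-1) := by
  set gx : ℤ → AddCircle (1:ℝ) :=
    fun s => (if Even (y/q) then (1:ℤ) else -1) • ψ (s, sigmaFold q y) with hgx
  set gy : ℤ → AddCircle (1:ℝ) :=
    fun t => (if Even (x/p) then (1:ℤ) else -1) • ψ (sigmaFold p x, t) with hgy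
  have hgx0 := gx_vanish p q ψ hp hq hψ0 y
  have hgy0 := gy_vanish p q ψ hp hq hψ0 x
  by_cases hx : x % p = 0
  · -- column of zeros
    have hσ : sigmaFold p x = 0 ∨ sigmaFold p x = p := sigma_dvd p x hp hx
    have hgyz : ∀ t, gy t = 0 := by
      intro t
      rw [hgy]; dsimp only
      rw [isK_vanish hψ0 _ t (by rcases hσ with h|h <;> omega)]; simp
    rw [tilde_as_tgx p q ψ x y, tilde_as_tgx p q ψ (x+1) y, tilde_as_tgx p q ψ (x-1) y,
      tilde_as_tgy p q ψ x (y+1), tilde_as_tgy p q ψ x (y-1)]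
    rw [tg_dvd p gx hp hgx0 x hx]
    have h2 : tg p gx (x+1) + tg p gx (x-1) = 0 := tg_dvd_sum p gx hp hgx0 x hx
    have h3 : tg q gy (y+1) = 0 := by simp [tg, hgyz]
    have h4 : tg q gy (y-1) = 0 := by simp [tg, hgyz]
    rw [h3, h4]
    rw [add_zero, add_zero, h2]
    simp
  · by_cases hy : y % q = 0
    · have hσ : sigmaFold q y = 0 ∨ sigmaFold q y = q := sigma_dvd q y hq hy
      have hgxz : ∀ s, gx s = 0 := by
        intro s
        rw [hgx]; dsimp only
        rw [isK_vanish hψ0 s _ (by rcases hσ with h|h <;> omega)]; simp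
      rw [tilde_as_tgy p q ψ x y, tilde_as_tgy p q ψ x (y+1), tilde_as_tgy p q ψ x (y-1),
        tilde_as_tgx p q ψ (x+1) y, tilde_as_tgx p q ψ (x-1) y]
      rw [tg_dvd q gy hq hgy0 y hy]
      have h2 : tg q gy (y+1) + tg q gy (y-1) = 0 := tg_dvd_sum q gy hq hgy0 y hy
      have h3 : tg p gx (x+1) = 0 := by simp [tg, hgxz]
      have h4 : tg p gx (x-1) = 0 := by simp [tg, hgxz]
      rw [h3, h4]
      rw [smul_zero, zero_add, zero_add]
      exact h2.symm
    · -- interior case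
      have hσx := sigma_pos p x hp hx
      have hσy := sigma_pos q y hq hy
      have hint : InRect p q (sigmaFold p x, sigmaFold q y) :=
        ⟨hσx.1, hσx.2, hσy.1, hσy.2⟩
      have h4 := hψ.2 _ hint
      dsimp only at h4
      have hXsum : tilde p q ψ (x+1, y) + tilde p q ψ (x-1, y) =
          (if Even (x/p) then (1:ℤ) else -1) •
            (gx (sigmaFold p x + 1) + gx (sigmaFold p x - 1)) := by
        rw [tilde_as_tgx p q ψ (x+1) y, tilde_as_tgx p q ψ (x-1) y]
        exact tg_sum p gx hp hgx0 x hx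
      have hYsum : tilde p q ψ (x, y+1) + tilde p q ψ (x, y-1) =
          (if Even (y/q) then (1:ℤ) else -1) •
            (gy (sigmaFold q y + 1) + gy (sigmaFold q y - 1)) := by
        rw [tilde_as_tgy p q ψ x (y+1), tilde_as_tgy p q ψ x (y-1)]
        exact tg_sum q gy hq hgy0 y hy
      set a : ℤ := if Even (x/p) then (1:ℤ) else -1 with ha
      set b : ℤ := if Even (y/q) then (1:ℤ) else -1 with hb
      have key : tilde p q ψ (x, y) = a • b • ψ (sigmaFold p x, sigmaFold q y) := by
        unfold tilde; dsimp only; rw [eps_mul, ← ha, ← hb]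
      rw [add_assoc, hXsum, hYsum, key]
      rw [hgx]; rw [hgy]; dsimp only
      rw [smul_comm (4:ℤ) a, smul_comm (4:ℤ) b, h4]
      simp only [smul_add]
      rw [smul_comm b a (ψ (sigmaFold p x, sigmaFold q y + 1)),
          smul_comm b a (ψ (sigmaFold p x, sigmaFold q y - 1))]
      abel
end Tilde

theorem foldMap_isK (p q P Q : ℤ) (hp : 0 < p) (hq : 0 < q)
    (hP : P % p = 0) (hQ : Q % q = 0) (ψ : ℤ × ℤ → AddCircle (1:ℝ))
    (hψ : IsK p q ψ) : IsK P Q (foldMap p q P Q ψ) := by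
  constructor
  · intro v hv; simp [foldMap, hv]
  · intro v hv
    have key : ∀ w : ℤ × ℤ, 0 ≤ w.1 → w.1 ≤ P → 0 ≤ w.2 → w.2 ≤ Q →
        foldMap p q P Q ψ w = tilde p q ψ w := by
      intro w a b c d
      by_cases hw : InRect P Q w
      · rw [foldMap, if_pos hw]; rfl
      · rw [foldMap, if_neg hw]
        have hcase : w.1 = 0 ∨ w.1 = P ∨ w.2 = 0 ∨ w.2 = Q := by
          unfold InRect at hw; omega
        have : w.1 % p = 0 ∨ w.2 % q = 0 := by
          rcases hcase with h|h|h|h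
          · left; rw [h]; exact Int.zero_emod p
          · left; rw [h]; exact hP
          · right; rw [h]; exact Int.zero_emod q
          · right; rw [h]; exact hQ
        exact (tilde_vanish p q ψ hp hq hψ.1 w.1 w.2 this).symm
    obtain ⟨h1, h2, h3, h4⟩ := hv
    rw [key v (by omega) (by omega) (by omega) (by omega),
        key (v.1+1, v.2) (by simp; omega) (by simp; omega) (by simp; omega) (by simp; omega),
        key (v.1-1, v.2) (by simp; omega) (by simp; omega) (by simp; omega) (by simp; omega),
        key (v.1, v.2+1) (by simp; omega) (by simp; omega) (by simp; omega) (by simp; omega),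
        key (v.1, v.2-1) (by simp; omega) (by simp; omega) (by simp; omega) (by simp; omega)]
    exact tilde_harmonic p q ψ hp hq hψ.1 hψ (v.1) (v.2)

section Telescope
variable {M : Type*} [AddCommGroup M] (p : ℤ) (m : ℕ) (f : ℤ → M)
  (hf : ∀ s, s ≤ 0 ∨ (m:ℤ)*p ≤ s → f s = 0)

include hf

lemma sumF0 : ∑ k ∈ Finset.range m, ((-1:ℤ)^k) • f (muFold p (k:ℤ) 0) = 0 := by
  set b : ℕ → M := fun k => if Even k then f ((k:ℤ)*p) else 0 with hb
  have hterm : ∀ k ∈ Finset.range m,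
      ((-1:ℤ)^k) • f (muFold p (k:ℤ) 0) = b k - b (k+1) := by
    intro k _
    rcases Nat.even_or_odd k with he | ho
    · have heZ : Even (k:ℤ) := by rwa [Int.even_coe_nat]
      simp [hb, muFold, heZ, he, Nat.even_add_one, Even.neg_one_pow he]
    · have he' : ¬ Even k := Nat.not_even_iff_odd.mpr ho
      have hoZ : ¬ Even (k:ℤ) := by rwa [Int.even_coe_nat]
      simp [hb, muFold, hoZ, he', Nat.even_add_one, Odd.neg_one_pow ho]
  rw [Finset.sum_congr rfl hterm, Finset.sum_range_sub' b m]
  have hb0 : b 0 = 0 := by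
    have := hf 0 (Or.inl le_rfl)
    simp [hb, this]
  have hbm : b m = 0 := by
    rw [hb]; dsimp only; split
    · exact hf _ (Or.inr le_rfl)
    · rfl
  rw [hb0, hbm, sub_zero]

lemma sumFp : ∑ k ∈ Finset.range m, ((-1:ℤ)^k) • f (muFold p (k:ℤ) p) = 0 := by
  set b : ℕ → M := fun k => if Even k then 0 else f ((k:ℤ)*p) with hb
  have hterm : ∀ k ∈ Finset.range m,
      ((-1:ℤ)^k) • f (muFold p (k:ℤ) p) = b (k+1) - b k := by
    intro k _
    rcases Nat.even_or_odd k with he | ho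
    · have heZ : Even (k:ℤ) := by rwa [Int.even_coe_nat]
      have e : (k:ℤ)*p + p = ((k:ℤ)+1)*p := by ring
      simp [hb, muFold, heZ, he, Nat.even_add_one, Even.neg_one_pow he, e]
    · have he' : ¬ Even k := Nat.not_even_iff_odd.mpr ho
      have hoZ : ¬ Even (k:ℤ) := by rwa [Int.even_coe_nat]
      have e : ((k:ℤ)+1)*p - p = (k:ℤ)*p := by ring
      simp [hb, muFold, hoZ, he', Nat.even_add_one, e,
        Odd.neg_one_pow ho]
  rw [Finset.sum_congr rfl hterm, Finset.sum_range_sub b m]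
  have hb0 : b 0 = 0 := by simp [hb]
  have hbm : b m = 0 := by
    rw [hb]; dsimp only; split
    · rfl
    · exact hf _ (Or.inr le_rfl)
  rw [hb0, hbm, sub_zero]
end Telescope

lemma mu_bound (p : ℤ) (hp : 0 < p) (m : ℕ) (k : ℕ) (hk : k < m) (x : ℤ)
    (h0 : 0 < x) (h1 : x < p) : 0 < muFold p (k:ℤ) x ∧ muFold p (k:ℤ) x < (m:ℤ)*p := by
  have hkm : ((k:ℤ)+1) ≤ (m:ℤ) := by exact_mod_cast hk
  have h2 : ((k:ℤ)+1) * p ≤ (m:ℤ)*p := mul_le_mul_of_nonneg_right hkm hp.le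
  have h3 : 0 ≤ (k:ℤ)*p := mul_nonneg (Int.natCast_nonneg k) hp.le
  unfold muFold; split <;> constructor <;> nlinarith

lemma mu_pair {M : Type*} [AddCommGroup M] (p k x : ℤ) (f : ℤ → M) :
    f (muFold p k x + 1) + f (muFold p k x - 1) =
    f (muFold p k (x+1)) + f (muFold p k (x-1)) := by
  unfold muFold
  split
  · have e1 : k*p + x + 1 = k*p + (x+1) := by ring
    have e2 : k*p + x - 1 = k*p + (x-1) := by ring
    rw [e1, e2]
  · have e1 : (k+1)*p - x + 1 = (k+1)*p - (x-1) := by ring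
    have e2 : (k+1)*p - x - 1 = (k+1)*p - (x+1) := by ring
    rw [e1, e2, add_comm]

noncomputable def Fsum (p q : ℤ) (m n : ℕ) (ψ : ℤ × ℤ → AddCircle (1:ℝ)) :
    ℤ × ℤ → AddCircle (1:ℝ) :=
  fun v => ∑ k ∈ Finset.range m, ∑ l ∈ Finset.range n,
    ((-1 : ℤ) ^ (k + l)) • ψ (muFold p k v.1, muFold q l v.2)

section FS
variable (p q : ℤ) (m n : ℕ) (ψ : ℤ × ℤ → AddCircle (1:ℝ))
  (hψ0 : ∀ v, ¬ InRect ((m:ℤ)*p) ((n:ℤ)*q) v → ψ v = 0)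

include hψ0

lemma Fsum_vanish (w : ℤ × ℤ) (hcase : w.1 = 0 ∨ w.1 = p ∨ w.2 = 0 ∨ w.2 = q) :
    Fsum p q m n ψ w = 0 := by
  unfold Fsum
  rcases hcase with h | h | h | h
  · rw [Finset.sum_comm]
    apply Finset.sum_eq_zero
    intro l _
    have : ∀ k ∈ Finset.range m, ((-1:ℤ)^(k+l)) • ψ (muFold p k w.1, muFold q l w.2)
        = ((-1:ℤ)^l) • (((-1:ℤ)^k) • ψ (muFold p k w.1, muFold q l w.2)) := by
      intro k _
      rw [← mul_smul, ← pow_add, add_comm l k]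
    rw [Finset.sum_congr rfl this, ← Finset.smul_sum, h]
    rw [sumF0 p m (fun s => ψ (s, muFold q l w.2))
      (fun s hs => isK_vanish hψ0 s _ (by tauto)), smul_zero]
  · rw [Finset.sum_comm]
    apply Finset.sum_eq_zero
    intro l _
    have : ∀ k ∈ Finset.range m, ((-1:ℤ)^(k+l)) • ψ (muFold p k w.1, muFold q l w.2)
        = ((-1:ℤ)^l) • (((-1:ℤ)^k) • ψ (muFold p k w.1, muFold q l w.2)) := by
      intro k _
      rw [← mul_smul, ← pow_add, add_comm l k]
    rw [Finset.sum_congr rfl this, ← Finset.smul_sum, h]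
    rw [sumFp p m (fun s => ψ (s, muFold q l w.2))
      (fun s hs => isK_vanish hψ0 s _ (by tauto)), smul_zero]
  · apply Finset.sum_eq_zero
    intro k _
    have : ∀ l ∈ Finset.range n, ((-1:ℤ)^(k+l)) • ψ (muFold p k w.1, muFold q l w.2)
        = ((-1:ℤ)^k) • (((-1:ℤ)^l) • ψ (muFold p k w.1, muFold q l w.2)) := by
      intro l _
      rw [← mul_smul, ← pow_add]
    rw [Finset.sum_congr rfl this, ← Finset.smul_sum, h]
    rw [sumF0 q n (fun t => ψ (muFold p k w.1, t))
      (fun t ht => isK_vanish hψ0 _ t (by tauto)), smul_zero]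
  · apply Finset.sum_eq_zero
    intro k _
    have : ∀ l ∈ Finset.range n, ((-1:ℤ)^(k+l)) • ψ (muFold p k w.1, muFold q l w.2)
        = ((-1:ℤ)^k) • (((-1:ℤ)^l) • ψ (muFold p k w.1, muFold q l w.2)) := by
      intro l _
      rw [← mul_smul, ← pow_add]
    rw [Finset.sum_congr rfl this, ← Finset.smul_sum, h]
    rw [sumFp q n (fun t => ψ (muFold p k w.1, t))
      (fun t ht => isK_vanish hψ0 _ t (by tauto)), smul_zero]
end FS

theorem dualMap_isK (p q : ℤ) (m n : ℕ) (hp : 0 < p) (hq : 0 < q)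
    (ψ : ℤ × ℤ → AddCircle (1:ℝ)) (hψ : IsK ((m:ℤ)*p) ((n:ℤ)*q) ψ) :
    IsK p q (dualMap p q m n ψ) := by
  constructor
  · intro v hv; simp [dualMap, hv]
  · intro v hv
    have key : ∀ w : ℤ × ℤ, 0 ≤ w.1 → w.1 ≤ p → 0 ≤ w.2 → w.2 ≤ q →
        dualMap p q m n ψ w = Fsum p q m n ψ w := by
      intro w a b c d
      by_cases hw : InRect p q w
      · rw [dualMap, if_pos hw]; rfl
      · rw [dualMap, if_neg hw]
        have hcase : w.1 = 0 ∨ w.1 = p ∨ w.2 = 0 ∨ w.2 = q := by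
          unfold InRect at hw; omega
        exact (Fsum_vanish p q m n ψ hψ.1 w hcase).symm
    obtain ⟨h1, h2, h3, h4⟩ := hv
    rw [key v (by omega) (by omega) (by omega) (by omega),
        key (v.1+1, v.2) (by simp; omega) (by simp; omega) (by simp; omega) (by simp; omega),
        key (v.1-1, v.2) (by simp; omega) (by simp; omega) (by simp; omega) (by simp; omega),
        key (v.1, v.2+1) (by simp; omega) (by simp; omega) (by simp; omega) (by simp; omega),
        key (v.1, v.2-1) (by simp; omega) (by simp; omega) (by simp; omega) (by simp; omega)]
    unfold Fsum
    dsimp only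
    rw [Finset.smul_sum]
    have main : ∀ k ∈ Finset.range m, (4:ℤ) • ∑ l ∈ Finset.range n,
        ((-1:ℤ)^(k+l)) • ψ (muFold p k v.1, muFold q l v.2) =
        ∑ l ∈ Finset.range n,
          (((-1:ℤ)^(k+l)) • ψ (muFold p k (v.1+1), muFold q l v.2) +
           ((-1:ℤ)^(k+l)) • ψ (muFold p k (v.1-1), muFold q l v.2) +
           ((-1:ℤ)^(k+l)) • ψ (muFold p k v.1, muFold q l (v.2+1)) +
           ((-1:ℤ)^(k+l)) • ψ (muFold p k v.1, muFold q l (v.2-1))) := by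
      intro k hk
      rw [Finset.smul_sum]
      apply Finset.sum_congr rfl
      intro l hl
      rw [smul_comm]
      have hmem : InRect ((m:ℤ)*p) ((n:ℤ)*q) (muFold p k v.1, muFold q l v.2) := by
        have hx := mu_bound p hp m k (Finset.mem_range.mp hk) v.1 h1 h2
        have hy := mu_bound q hq n l (Finset.mem_range.mp hl) v.2 h3 h4
        exact ⟨hx.1, hx.2, hy.1, hy.2⟩
      rw [hψ.2 _ hmem]
      dsimp only
      have ex := mu_pair p (k:ℤ) v.1 (fun s => ψ (s, muFold q (l:ℤ) v.2))
      have ey := mu_pair q (l:ℤ) v.2 (fun t => ψ (muFold p (k:ℤ) v.1, t))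
      rw [add_assoc, ex, ey, smul_add, smul_add, smul_add]
      abel
    rw [Finset.sum_congr rfl main]
    simp only [Finset.sum_add_distrib]


lemma mu_div_sigma (p : ℤ) (hp : 0 < p) (k x : ℤ) (h0 : 0 < x) (h1 : x < p) :
    (muFold p k x) / p = k ∧ sigmaFold p (muFold p k x) = x := by
  rcases em (Even k) with he | he
  · have hd := divmod_eq p k x hp h0.le h1
    constructor
    · rw [muFold, if_pos he]; exact hd.1
    · rw [muFold, if_pos he, sigma_eq, hd.1, hd.2, if_pos he]
  · have hd := divmod_eq p k (p - x) hp (by omega) (by omega)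
    have e : k*p + (p - x) = (k+1)*p - x := by ring
    rw [e] at hd
    constructor
    · rw [muFold, if_neg he]; exact hd.1
    · rw [muFold, if_neg he, sigma_eq, hd.1, hd.2, if_neg he]; ring

theorem dual_fold (p q : ℤ) (m n : ℕ) (hp : 0 < p) (hq : 0 < q)
    (ψ : ℤ × ℤ → AddCircle (1:ℝ)) (hψ : IsK p q ψ) :
    dualMap p q m n (foldMap p q ((m:ℤ)*p) ((n:ℤ)*q) ψ) = ((m:ℤ)*(n:ℤ)) • ψ := by
  funext v
  by_cases hv : InRect p q v
  · rw [dualMap, Pi.smul_apply]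
    rw [if_pos hv]
    obtain ⟨h1, h2, h3, h4⟩ := hv
    have hterm : ∀ k ∈ Finset.range m, ∀ l ∈ Finset.range n,
        ((-1:ℤ)^(k+l)) • foldMap p q ((m:ℤ)*p) ((n:ℤ)*q) ψ
          (muFold p (k:ℤ) v.1, muFold q (l:ℤ) v.2) = ψ v := by
      intro k hk l hl
      have hx := mu_bound p hp m k (Finset.mem_range.mp hk) v.1 h1 h2
      have hy := mu_bound q hq n l (Finset.mem_range.mp hl) v.2 h3 h4
      have hmem : InRect ((m:ℤ)*p) ((n:ℤ)*q) (muFold p (k:ℤ) v.1, muFold q (l:ℤ) v.2) :=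
        ⟨hx.1, hx.2, hy.1, hy.2⟩
      have hdx := mu_div_sigma p hp (k:ℤ) v.1 h1 h2
      have hdy := mu_div_sigma q hq (l:ℤ) v.2 h3 h4
      rw [foldMap]
      dsimp only
      rw [if_pos hmem, hdx.1, hdx.2, hdy.1, hdy.2]
      have hcast : Even ((k:ℤ) + (l:ℤ)) ↔ Even (k + l) := by
        rw [← Nat.cast_add, Int.even_coe_nat]
      rcases Nat.even_or_odd (k + l) with he | ho
      · rw [if_pos (hcast.mpr he), Even.neg_one_pow he]
        simp
      · rw [if_neg (by rw [hcast]; exact Nat.not_even_iff_odd.mpr ho), Odd.neg_one_pow ho]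
        simp
    rw [Finset.sum_congr rfl (fun k hk => Finset.sum_congr rfl (hterm k hk))]
    simp only [Finset.sum_const, Finset.card_range, smul_smul]
    rw [← natCast_zsmul (ψ v) (m * n)]
    push_cast
    ring_nf
  · rw [dualMap, Pi.smul_apply]
    rw [if_neg hv, hψ.1 v hv, smul_zero]

lemma mem_rectPts (p q : ℕ) (v : ℤ × ℤ) :
    v ∈ rectPts p q ↔ InRect (p:ℤ) (q:ℤ) v := by
  cases v with
  | mk a b => simp [rectPts, InRect, Finset.mem_product, and_assoc]

lemma sq_one (a b : ℤ) (h : a^2 + b^2 = 1) :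
    (a=1∧b=0)∨(a=-1∧b=0)∨(a=0∧b=1)∨(a=0∧b=-1) := by
  have h1 : -1 ≤ a ∧ a ≤ 1 := by constructor <;> nlinarith [sq_nonneg b, sq_nonneg a]
  have h2 : -1 ≤ b ∧ b ≤ 1 := by constructor <;> nlinarith [sq_nonneg b, sq_nonneg a]
  obtain ⟨h1a, h1b⟩ := h1; obtain ⟨h2a, h2b⟩ := h2
  interval_cases a <;> interval_cases b <;> omega

theorem gamma_smul (p q : ℕ) (ψ : ℤ × ℤ → AddCircle (1:ℝ))
    (hψ : IsK (p:ℤ) (q:ℤ) ψ) (v : ℤ × ℤ) : gammaRect p q • ψ v = 0 := by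
  classical
  have step1 : ∀ v : rectPts p q, ∑ w : rectPts p q, rectLap p q v w • ψ (w:ℤ×ℤ) = 0 := by
    intro v
    have hv := (mem_rectPts p q v).mp v.2
    obtain ⟨h1, h2, h3, h4⟩ := hv
    set x := (v:ℤ×ℤ).1 with hx
    set y := (v:ℤ×ℤ).2 with hy
    set N : Finset (ℤ × ℤ) := {(x+1,y), (x-1,y), (x,y+1), (x,y-1)} with hN
    have hsplit : ∀ w : rectPts p q, rectLap p q v w • ψ (w:ℤ×ℤ) =
        (if v = w then (4:ℤ) else 0) • ψ (w:ℤ×ℤ) +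
        (if (w:ℤ×ℤ) ∈ N then -(ψ (w:ℤ×ℤ)) else 0) := by
      intro w
      have hcond : ((x - (w:ℤ×ℤ).1)^2 + (y-(w:ℤ×ℤ).2)^2 = 1) ↔ (w:ℤ×ℤ) ∈ N := by
        constructor
        · intro h
          rcases sq_one _ _ h with ⟨ha,hb⟩|⟨ha,hb⟩|⟨ha,hb⟩|⟨ha,hb⟩ <;>
            · simp only [hN, Finset.mem_insert, Finset.mem_singleton, Prod.ext_iff]
              omega
        · intro h
          simp only [hN, Finset.mem_insert, Finset.mem_singleton] at h
          rcases h with h|h|h|h <;> rw [h] <;> ring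
      rcases em (v = w) with hvw | hvw
      · subst hvw
        have : ¬ (x - (v:ℤ×ℤ).1)^2 + (y-(v:ℤ×ℤ).2)^2 = 1 := by
          rw [← hx, ← hy]; simp
        rw [rectLap, if_pos rfl, if_pos rfl]
        rw [if_neg (fun hmem => this (hcond.mpr hmem))]
        simp
      · rw [rectLap, if_neg hvw, if_neg hvw, zero_smul, zero_add]
        by_cases hd : (x - (w:ℤ×ℤ).1)^2 + (y-(w:ℤ×ℤ).2)^2 = 1
        · rw [if_pos hd, if_pos (hcond.mp hd)]
          simp
        · rw [if_neg hd, if_neg (fun hmem => hd (hcond.mpr hmem)), zero_smul]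
    rw [Finset.sum_congr rfl (fun w _ => hsplit w), Finset.sum_add_distrib]
    have e1 : ∑ w : rectPts p q, (if v = w then (4:ℤ) else 0) • ψ (w:ℤ×ℤ) = (4:ℤ) • ψ (v:ℤ×ℤ) := by
      rw [Finset.sum_eq_single v]
      · rw [if_pos rfl]
      · intro w _ hw; rw [if_neg (Ne.symm hw), zero_smul]
      · intro h; exact absurd (Finset.mem_univ v) h
    have e2 : ∑ w : rectPts p q, (if (w:ℤ×ℤ) ∈ N then -(ψ (w:ℤ×ℤ)) else 0) =
        -(ψ (x+1,y) + ψ (x-1,y) + ψ (x,y+1) + ψ (x,y-1)) := by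
      rw [Finset.sum_coe_sort (rectPts p q) (fun w => if w ∈ N then -(ψ w) else 0),
        Finset.sum_ite_mem]
      have hsub : ∑ w ∈ rectPts p q ∩ N, -ψ w = ∑ w ∈ N, -ψ w := by
        apply Finset.sum_subset Finset.inter_subset_right
        intro w hwN hwn
        have : w ∉ rectPts p q := fun hmem => hwn (Finset.mem_inter.mpr ⟨hmem, hwN⟩)
        rw [hψ.1 w (fun hin => this ((mem_rectPts p q w).mpr hin)), neg_zero]
      rw [hsub, hN]
      rw [Finset.sum_insert (by simp only [Finset.mem_insert, Finset.mem_singleton, Prod.ext_iff]; omega),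
          Finset.sum_insert (by simp only [Finset.mem_insert, Finset.mem_singleton, Prod.ext_iff]; omega),
          Finset.sum_insert (by simp only [Finset.mem_insert, Finset.mem_singleton, Prod.ext_iff]; omega),
          Finset.sum_singleton]
      abel
    rw [e1, e2]
    have := hψ.2 (v:ℤ×ℤ) ⟨h1, h2, h3, h4⟩
    rw [← hx, ← hy] at this
    rw [this]
    abel
  have step2 : ∀ v : rectPts p q, (rectLap p q).det • ψ (v:ℤ×ℤ) = 0 := by
    intro v
    have hassoc : ∑ w : rectPts p q, ((rectLap p q).adjugate * rectLap p q) v w • ψ (w:ℤ×ℤ) =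
        ∑ x : rectPts p q, (rectLap p q).adjugate v x •
          (∑ w : rectPts p q, rectLap p q x w • ψ (w:ℤ×ℤ)) := by
      simp only [Matrix.mul_apply, Finset.sum_smul, mul_smul, Finset.smul_sum]
      exact Finset.sum_comm
    have h1 : ∑ w : rectPts p q, ((rectLap p q).adjugate * rectLap p q) v w • ψ (w:ℤ×ℤ) = 0 := by
      rw [hassoc]
      apply Finset.sum_eq_zero
      intro x _
      rw [step1 x, smul_zero]
    rw [Matrix.adjugate_mul] at h1
    have h2 : ∑ w : rectPts p q, ((rectLap p q).det • (1:Matrix (rectPts p q) (rectPts p q) ℤ)) v w • ψ (w:ℤ×ℤ)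
        = (rectLap p q).det • ψ (v:ℤ×ℤ) := by
      rw [Finset.sum_eq_single v]
      · simp [Matrix.one_apply]
      · intro w _ hw
        simp [Matrix.one_apply, Ne.symm hw, Matrix.smul_apply]
      · intro h; exact absurd (Finset.mem_univ v) h
    rw [h2] at h1
    exact h1
  by_cases hv : InRect (p:ℤ) (q:ℤ) v
  · have hvm : v ∈ rectPts p q := (mem_rectPts p q v).mpr hv
    have := step2 ⟨v, hvm⟩
    unfold gammaRect
    rcases abs_cases (rectLap p q).det with ⟨h,_⟩|⟨h,_⟩
    · rw [h]; exact this
    · rw [h, neg_smul, this, neg_zero]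
  · rw [hψ.1 v hv, smul_zero]

section Alg
variable (p q P Q : ℤ) (m n : ℕ)

lemma foldMap_add (ψ φ : ℤ × ℤ → AddCircle (1:ℝ)) :
    foldMap p q P Q (ψ + φ) = foldMap p q P Q ψ + foldMap p q P Q φ := by
  funext v
  by_cases h : InRect P Q v <;> simp [foldMap, h, smul_add]

lemma foldMap_neg (ψ : ℤ × ℤ → AddCircle (1:ℝ)) :
    foldMap p q P Q (-ψ) = -(foldMap p q P Q ψ) := by
  funext v
  by_cases h : InRect P Q v <;> simp [foldMap, h]

lemma foldMap_zero : foldMap p q P Q (0 : ℤ × ℤ → AddCircle (1:ℝ)) = 0 := by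
  funext v
  by_cases h : InRect P Q v <;> simp [foldMap, h]

lemma foldMap_zsmul (c : ℤ) (ψ : ℤ × ℤ → AddCircle (1:ℝ)) :
    foldMap p q P Q (c • ψ) = c • foldMap p q P Q ψ := by
  funext v
  by_cases h : InRect P Q v <;> simp [foldMap, h, smul_comm _ c]

lemma dualMap_add (ψ φ : ℤ × ℤ → AddCircle (1:ℝ)) :
    dualMap p q m n (ψ + φ) = dualMap p q m n ψ + dualMap p q m n φ := by
  funext v
  by_cases h : InRect p q v <;>
    simp [dualMap, h, smul_add, Finset.sum_add_distrib]

lemma dualMap_neg (ψ : ℤ × ℤ → AddCircle (1:ℝ)) :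
    dualMap p q m n (-ψ) = -(dualMap p q m n ψ) := by
  funext v
  by_cases h : InRect p q v <;> simp [dualMap, h, Finset.sum_neg_distrib]
end Alg

lemma mem_Ksub (p q : ℤ) (ψ : ℤ × ℤ → AddCircle (1:ℝ)) :
    ψ ∈ Ksub p q ↔ IsK p q ψ := Iff.rfl

/-- If `mn` is coprime to `γ(p,q)`, the image of the fold monomorphism
`ι : K(p,q) → K(mp,nq)` is a direct summand: there is a subgroup `H` of
`K(mp,nq)` such that every element of `K(mp,nq)` is uniquely the sum of an
element of `ι(K(p,q))` and an element of `H`.  In other words, `G(p,q)` is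
realized as a direct summand of `G(mp,nq)`. -/
theorem foldMap_image_isDirectSummand (p q m n : ℕ)
    (hp : 0 < p) (hq : 0 < q) (hm : 0 < m) (hn : 0 < n)
    (hco : IsCoprime ((m : ℤ) * n) (gammaRect p q)) :
    ∃ H : AddSubgroup ((ℤ × ℤ) → AddCircle (1 : ℝ)),
      H ≤ Ksub ((m : ℤ) * p) ((n : ℤ) * q) ∧
      (∀ x ∈ Ksub ((m : ℤ) * p) ((n : ℤ) * q),
        ∃ ψ, IsK p q ψ ∧ ∃ h ∈ H,
          x = foldMap p q ((m : ℤ) * p) ((n : ℤ) * q) ψ + h) ∧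
      (∀ ψ₁ ψ₂, IsK p q ψ₁ → IsK p q ψ₂ → ∀ h₁ ∈ H, ∀ h₂ ∈ H,
        foldMap p q ((m : ℤ) * p) ((n : ℤ) * q) ψ₁ + h₁ =
          foldMap p q ((m : ℤ) * p) ((n : ℤ) * q) ψ₂ + h₂ →
        foldMap p q ((m : ℤ) * p) ((n : ℤ) * q) ψ₁ =
          foldMap p q ((m : ℤ) * p) ((n : ℤ) * q) ψ₂ ∧ h₁ = h₂) := by
  have hpz : (0:ℤ) < (p:ℤ) := by exact_mod_cast hp
  have hqz : (0:ℤ) < (q:ℤ) := by exact_mod_cast hq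
  set P : ℤ := (m:ℤ) * p with hPdef
  set Q : ℤ := (n:ℤ) * q with hQdef
  obtain ⟨a, b, hab⟩ := hco
  set ρ : ((ℤ × ℤ) → AddCircle (1:ℝ)) → ((ℤ × ℤ) → AddCircle (1:ℝ)) :=
    fun x => foldMap p q P Q (a • dualMap p q m n x) with hρ
  have hfoldK : ∀ ψ, IsK p q ψ → IsK P Q (foldMap p q P Q ψ) := by
    intro ψ h
    exact foldMap_isK p q P Q hpz hqz (by rw [hPdef]; exact Int.mul_emod_left _ _)
      (by rw [hQdef]; exact Int.mul_emod_left _ _) ψ h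
  have hdualK : ∀ x, IsK P Q x → IsK p q (dualMap p q m n x) := by
    intro x h
    exact dualMap_isK p q m n hpz hqz x h
  have hsmulK : ∀ (c : ℤ) ψ, IsK p q ψ → IsK p q (c • ψ) := by
    intro c ψ h
    exact AddSubgroup.zsmul_mem (Ksub (p:ℤ) (q:ℤ)) h c
  have hgam : ∀ ψ, IsK p q ψ → gammaRect p q • ψ = 0 := by
    intro ψ h
    funext v
    exact gamma_smul p q ψ h v
  have hfix : ∀ ψ, IsK p q ψ → (a * ((m:ℤ) * n)) • ψ = ψ := by
    intro ψ h
    have : ((a * ((m:ℤ) * n)) + b * gammaRect p q) • ψ = ψ := by rw [hab, one_smul]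
    rw [add_smul, mul_smul b, hgam ψ h, smul_zero, add_zero] at this
    exact this
  have key1 : ∀ ψ, IsK p q ψ → ρ (foldMap p q P Q ψ) = foldMap p q P Q ψ := by
    intro ψ h
    rw [hρ]
    dsimp only
    rw [hPdef, hQdef, dual_fold p q m n hpz hqz ψ h, smul_smul, hfix ψ h]
  have hρadd : ∀ x y, ρ (x + y) = ρ x + ρ y := by
    intro x y
    rw [hρ]
    dsimp only
    rw [dualMap_add, smul_add, foldMap_add]
  have hρneg : ∀ x, ρ (-x) = -(ρ x) := by
    intro x
    rw [hρ]
    dsimp only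
    rw [dualMap_neg, smul_neg, foldMap_neg]
  refine ⟨{ carrier := {x | IsK P Q x ∧ ρ x = 0}
            add_mem' := ?_
            zero_mem' := ?_
            neg_mem' := ?_ }, ?_, ?_, ?_⟩
  · rintro x y ⟨hx1, hx2⟩ ⟨hy1, hy2⟩
    exact ⟨(Ksub P Q).add_mem hx1 hy1, by rw [hρadd, hx2, hy2, add_zero]⟩
  · refine ⟨(Ksub P Q).zero_mem, ?_⟩
    rw [hρ]
    dsimp only
    have d0 : dualMap p q m n (0 : (ℤ × ℤ) → AddCircle (1:ℝ)) = 0 := by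
      funext v
      by_cases h : InRect p q v <;> simp [dualMap, h]
    rw [d0, smul_zero, foldMap_zero]
  · rintro x ⟨hx1, hx2⟩
    exact ⟨(Ksub P Q).neg_mem hx1, by rw [hρneg, hx2, neg_zero]⟩
  · intro x hx
    exact hx.1
  · intro x hx
    have hxK : IsK P Q x := hx
    set φ : (ℤ × ℤ) → AddCircle (1:ℝ) := a • dualMap p q m n x with hφ
    have hφK : IsK p q φ := hsmulK a _ (hdualK x hxK)
    refine ⟨φ, hφK, x - foldMap p q P Q φ, ⟨?_, ?_⟩, by abel⟩
    · exact (Ksub P Q).sub_mem hxK (hfoldK φ hφK)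
    · have hsub : ρ (x - foldMap p q P Q φ) = ρ x - ρ (foldMap p q P Q φ) := by
        rw [sub_eq_add_neg, hρadd, hρneg, ← sub_eq_add_neg]
      rw [hsub, key1 φ hφK]
      have : ρ x = foldMap p q P Q φ := by rw [hρ]
      rw [this, sub_self]
  · intro ψ₁ ψ₂ h1K h2K h₁ hh₁ h₂ hh₂ heq
    have happ := congrArg ρ heq
    rw [hρadd, hρadd, key1 ψ₁ h1K, key1 ψ₂ h2K, hh₁.2, hh₂.2, add_zero, add_zero] at happ
    refine ⟨happ, ?_⟩
    rw [happ] at heq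
    exact add_left_cancel heq
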